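/- Fix an integer d ≥ 1 and an integer j ≥ 3. For sequences α(N) > 0 and μ_1(N), ..., μ_j(N) > 0 indexed by N ∈ ℕ, if limsup_{N→∞} μ_{j-1}/μ_j < ∞ and μ_j·α^d·β_{j-1}^{d+1} → 0 as N → ∞, then μ_{j-1}·α^d·β_{j-2}^{d+1} → 0 as N → ∞, where β_m := (N·α^{(m-1)d}·∏_{i=1}^{m} μ_i)^{-1/((m-1)d+m)}. (Claim used in the paper to derive the alternative description (10) of the index l.) -/

import Mathlib

open Filter

/-- `beta d α μ m N` is the quantity
`β_m = (N · α^{(m-1)d} · ∏_{i=1}^{m} μ_i)^{-1/((m-1)d+m)}` from the paper,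
where all quantities depend on `N` and the power is a real power. -/
noncomputable def beta (d : ℕ) (α : ℕ → ℝ) (μ : ℕ → ℕ → ℝ) (m N : ℕ) : ℝ :=
  ((N : ℝ) * α N ^ ((m - 1) * d) * ∏ i ∈ Finset.Icc 1 m, μ i N) ^
    (-(1 / (((m - 1) * d + m : ℕ) : ℝ)))

lemma key_eq (d a b : ℕ) (ha : 0 < a) (hb : b = a + d + 1) (M Q : ℝ)
    (hM : 0 < M) (hQ : 0 < Q) :
    (M * ((Q * M) ^ (-(1 / (b : ℝ)))) ^ (d + 1)) ^ ((b : ℝ) / (a : ℝ)) =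
      M * (Q ^ (-(1 / (a : ℝ)))) ^ (d + 1) := by
  have hb0 : 0 < b := by omega
  have ha' : (a : ℝ) ≠ 0 := Nat.cast_ne_zero.mpr ha.ne'
  have hb' : (b : ℝ) ≠ 0 := Nat.cast_ne_zero.mpr hb0.ne'
  have h1 : 0 < Q ^ (-(1 / (a : ℝ))) := Real.rpow_pos_of_pos hQ _
  have h2 : 0 < (Q * M) ^ (-(1 / (b : ℝ))) := Real.rpow_pos_of_pos (mul_pos hQ hM) _
  have hL : 0 < M * (Q ^ (-(1 / (a : ℝ)))) ^ (d + 1) := mul_pos hM (pow_pos h1 _)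
  have hRin : 0 < M * ((Q * M) ^ (-(1 / (b : ℝ)))) ^ (d + 1) := mul_pos hM (pow_pos h2 _)
  have hR : 0 < (M * ((Q * M) ^ (-(1 / (b : ℝ)))) ^ (d + 1)) ^ ((b : ℝ) / (a : ℝ)) :=
    Real.rpow_pos_of_pos hRin _
  rw [← Real.exp_log hR, ← Real.exp_log hL]
  congr 1
  rw [Real.log_rpow hRin, Real.log_mul hM.ne' (pow_pos h2 _).ne',
    Real.log_mul hM.ne' (pow_pos h1 _).ne', Real.log_pow, Real.log_pow,
    Real.log_rpow hQ, Real.log_rpow (mul_pos hQ hM), Real.log_mul hQ.ne' hM.ne']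
  subst hb
  push_cast
  field_simp
  ring

/-- If `j ≥ 3`, `μ_{j-1} ≲ μ_j` and `μ_j·α^d·β_{j-1}^{d+1} → 0`,
then `μ_{j-1}·α^d·β_{j-2}^{d+1} → 0`. -/
theorem stmt1 (d j : ℕ) (hd : 1 ≤ d) (hj : 3 ≤ j)
    (α : ℕ → ℝ) (μ : ℕ → ℕ → ℝ)
    (hα : ∀ N, 0 < α N) (hμ : ∀ i, 1 ≤ i → i ≤ j → ∀ N, 0 < μ i N)
    (hbdd : IsBoundedUnder (· ≤ ·) atTop (fun N => μ (j - 1) N / μ j N))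
    (h : Tendsto (fun N => μ j N * α N ^ d * beta d α μ (j - 1) N ^ (d + 1)) atTop (nhds 0)) :
    Tendsto (fun N => μ (j - 1) N * α N ^ d * beta d α μ (j - 2) N ^ (d + 1)) atTop (nhds 0) := by
  obtain ⟨k, rfl⟩ : ∃ k, j = k + 3 := ⟨j - 3, by omega⟩
  have e1 : k + 3 - 1 = k + 2 := by omega
  have e2 : k + 3 - 2 = k + 1 := by omega
  rw [e1, e2]
  rw [e1] at hbdd h
  set a : ℕ := k * d + (k + 1) with ha_def
  set b : ℕ := (k + 1) * d + (k + 2) with hb_def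
  have hab : b = a + d + 1 := by rw [ha_def, hb_def]; ring
  have ha_pos : 0 < a := by omega
  have hb_pos : 0 < b := by omega
  have hc : (0 : ℝ) < (b : ℝ) / (a : ℝ) := by positivity
  -- positivity facts
  have hprod : ∀ m N, m ≤ k + 3 → 0 < ∏ i ∈ Finset.Icc 1 m, μ i N := by
    intro m N hm
    exact Finset.prod_pos fun i hi => by
      rw [Finset.mem_Icc] at hi
      exact hμ i hi.1 (hi.2.trans hm) N
  have hAnn : ∀ N, 0 ≤ μ (k + 3) N * α N ^ d * beta d α μ (k + 2) N ^ (d + 1) := by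
    intro N
    have h1 : 0 ≤ beta d α μ (k + 2) N := by
      apply Real.rpow_nonneg
      exact mul_nonneg (mul_nonneg (Nat.cast_nonneg N) (pow_nonneg (hα N).le _))
        (hprod (k + 2) N (by omega)).le
    exact mul_nonneg (mul_nonneg (hμ (k + 3) (by omega) le_rfl N).le
      (pow_nonneg (hα N).le _)) (pow_nonneg h1 _)
  -- the auxiliary function
  set g : ℕ → ℝ := fun N =>
    μ (k + 2) N / μ (k + 3) N *
      (μ (k + 3) N * α N ^ d * beta d α μ (k + 2) N ^ (d + 1)) with hg_def
  have hg : Tendsto g atTop (nhds 0) := by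
    obtain ⟨C, hC⟩ := hbdd
    rw [eventually_map] at hC
    apply squeeze_zero' (g := fun N =>
      C * (μ (k + 3) N * α N ^ d * beta d α μ (k + 2) N ^ (d + 1)))
    · filter_upwards with N
      have h1 := hμ (k + 2) (by omega) (by omega) N
      have h2 := hμ (k + 3) (by omega) le_rfl N
      exact mul_nonneg (div_nonneg h1.le h2.le) (hAnn N)
    · filter_upwards [hC] with N hN
      exact mul_le_mul_of_nonneg_right hN (hAnn N)
    · simpa using h.const_mul C
  have hcomp : Tendsto (fun N => g N ^ ((b : ℝ) / (a : ℝ))) atTop (nhds 0) := by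
    have cont : ContinuousAt (fun x : ℝ => x ^ ((b : ℝ) / (a : ℝ))) 0 :=
      Real.continuousAt_rpow_const 0 _ (Or.inr hc.le)
    have := cont.tendsto.comp hg
    simpa [Real.zero_rpow hc.ne', Function.comp_def] using this
  refine hcomp.congr' ?_
  filter_upwards [eventually_ge_atTop 1] with N hN
  have hαN := hα N
  have hμ2 := hμ (k + 2) (by omega) (by omega) N
  have hμ3 := hμ (k + 3) (by omega) le_rfl N
  have hNpos : (0 : ℝ) < (N : ℝ) := by exact_mod_cast hN
  set Q : ℝ := (N : ℝ) * α N ^ (k * d) * ∏ i ∈ Finset.Icc 1 (k + 1), μ i N with hQ_def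
  set M : ℝ := μ (k + 2) N * α N ^ d with hM_def
  have hQ : 0 < Q := by
    have := hprod (k + 1) N (by omega)
    positivity
  have hM : 0 < M := by positivity
  have hbeta1 : beta d α μ (k + 1) N = Q ^ (-(1 / (a : ℝ))) := by
    simp only [beta, Nat.add_sub_cancel, hQ_def, ha_def]
  have hbeta2 : beta d α μ (k + 2) N = (Q * M) ^ (-(1 / (b : ℝ))) := by
    rw [beta, show k + 2 - 1 = k + 1 from by omega, show (k + 1) * d + (k + 2) = b from hb_def.symm]
    congr 1
    rw [Finset.prod_Icc_succ_top (by omega : 1 ≤ k + 2),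
      show (k + 1) * d = k * d + d from by ring, pow_add]
    simp only [hQ_def, hM_def]
    ring
  have hginner : g N = M * ((Q * M) ^ (-(1 / (b : ℝ)))) ^ (d + 1) := by
    simp only [hg_def]
    rw [hbeta2, hM_def]
    field_simp
  rw [hginner, key_eq d a b ha_pos hab M Q hM hQ, hbeta1, hM_def]
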